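/- Let (X_i)_{i≥1} and (Y_i)_{i≥1} be i.i.d. standard Gaussian real random variables, with the two families mutually independent, and let 0 < δ ≤ 1/2. Then with probability at least 1 − 8δ, for every positive integer k, |∑_{i=1}^k X_i·Y_i| ≤ 5·√k·log(k/δ). -/

import Mathlib

open MeasureTheory ProbabilityTheory Real
open scoped NNReal ENNReal

set_option maxHeartbeats 1000000

lemma aux_pdf (x : ℝ) : gaussianPDFReal 0 1 x = (Real.sqrt (2*π))⁻¹ * Real.exp (-(x^2/2)) := by
  simp [gaussianPDFReal]
  ring_nf
  tauto

lemma aux_int_transfer (f : ℝ → ℝ) :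
    ∫ x, f x ∂(gaussianReal 0 1) = ∫ x, gaussianPDFReal 0 1 x * f x := by
  rw [gaussianReal_of_var_ne_zero 0 one_ne_zero]
  have h : (gaussianPDF 0 1) = fun x => ((Real.toNNReal (gaussianPDFReal 0 1 x) : ℝ≥0) : ℝ≥0∞) := rfl
  rw [h, integral_withDensity_eq_integral_smul ((measurable_gaussianPDFReal 0 1).real_toNNReal) f]
  congr 1
  ext x
  rw [NNReal.smul_def, Real.coe_toNNReal _ (gaussianPDFReal_nonneg 0 1 x), smul_eq_mul]

lemma aux_integrable_transfer (f : ℝ → ℝ) :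
    Integrable f (gaussianReal 0 1) ↔ Integrable (fun x => gaussianPDFReal 0 1 x * f x) volume := by
  rw [gaussianReal_of_var_ne_zero 0 one_ne_zero]
  have h : (gaussianPDF 0 1) = fun x => ((Real.toNNReal (gaussianPDFReal 0 1 x) : ℝ≥0) : ℝ≥0∞) := rfl
  rw [h, integrable_withDensity_iff_integrable_smul ((measurable_gaussianPDFReal 0 1).real_toNNReal)]
  constructor <;> intro hh <;> refine hh.congr (Filter.Eventually.of_forall fun x => ?_) <;>
    simp only [NNReal.smul_def, Real.coe_toNNReal _ (gaussianPDFReal_nonneg 0 1 x), smul_eq_mul]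

lemma aux_eqA (c : ℝ) : (fun y : ℝ => gaussianPDFReal 0 1 y * Real.exp (c*y))
    = fun y => ((Real.sqrt (2*π))⁻¹ * Real.exp (c^2/2)) * Real.exp (-(1/2) * (y - c)^2) := by
  funext y
  rw [aux_pdf, mul_assoc, ← Real.exp_add, mul_assoc, ← Real.exp_add]
  ring_nf

lemma aux_integrable_exp_mul (c : ℝ) :
    Integrable (fun y => Real.exp (c*y)) (gaussianReal 0 1) := by
  rw [aux_integrable_transfer, aux_eqA]
  exact ((integrable_exp_neg_mul_sq (by norm_num : (0:ℝ) < 1/2)).comp_sub_right c).const_mul _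

lemma aux_integral_exp_mul (c : ℝ) :
    ∫ y, Real.exp (c*y) ∂(gaussianReal 0 1) = Real.exp (c^2/2) := by
  rw [aux_int_transfer, aux_eqA, integral_const_mul,
    integral_sub_right_eq_self (fun y => Real.exp (-(1/2) * y^2)) c,
    integral_gaussian]
  rw [div_div_eq_mul_div, div_one, mul_comm]
  field_simp [Real.sqrt_ne_zero', Real.pi_pos]

lemma aux_eqB {a : ℝ} : (fun x : ℝ => gaussianPDFReal 0 1 x * Real.exp (a*x^2))
    = fun x => (Real.sqrt (2*π))⁻¹ * Real.exp (-(1/2 - a) * x^2) := by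
  funext x
  rw [aux_pdf, mul_assoc, ← Real.exp_add]
  ring_nf

lemma aux_integrable_exp_sq {a : ℝ} (ha : a < 1/2) :
    Integrable (fun x => Real.exp (a*x^2)) (gaussianReal 0 1) := by
  rw [aux_integrable_transfer, aux_eqB]
  exact (integrable_exp_neg_mul_sq (by linarith : (0:ℝ) < 1/2 - a)).const_mul _

lemma aux_integral_exp_sq {a : ℝ} (ha : a < 1/2) :
    ∫ x, Real.exp (a*x^2) ∂(gaussianReal 0 1) = (Real.sqrt (1-2*a))⁻¹ := by
  rw [aux_int_transfer, aux_eqB, integral_const_mul, integral_gaussian]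
  have h1 : (0:ℝ) < 1/2 - a := by linarith
  rw [Real.sqrt_div' π (by positivity), Real.sqrt_mul (by norm_num) π]
  have hπ : Real.sqrt π ≠ 0 := by positivity
  have h2 : Real.sqrt (1/2 - a) ≠ 0 := by positivity
  have h3 : (1:ℝ) - 2*a = 2 * (1/2 - a) := by ring
  rw [h3, Real.sqrt_mul (by norm_num) _]
  have h4 : Real.sqrt 2 ≠ 0 := by positivity
  have h5 : Real.sqrt π * Real.sqrt 2 * (Real.sqrt π)⁻¹ * (Real.sqrt 2)⁻¹ = 1 := by
    field_simp
  field_simp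

lemma aux_inv_sqrt_le {u : ℝ} (hu : 0 ≤ u) (hu4 : u ≤ 1/4) :
    (Real.sqrt (1-u))⁻¹ ≤ Real.exp u := by
  have key : Real.exp (-(2*u)) ≤ 1 - u := by
    have h1 : (1:ℝ) + 2*u ≤ Real.exp (2*u) := by
      have := Real.add_one_le_exp (2*u); linarith
    have h2 : Real.exp (-(2*u)) ≤ (1+2*u)⁻¹ := by
      rw [Real.exp_neg]
      exact inv_anti₀ (by linarith) h1
    have h3 : (1+2*u)⁻¹ ≤ 1 - u := by
      rw [inv_le_iff_one_le_mul₀ (by linarith)]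
      nlinarith
    linarith
  have hsq : Real.exp (-u) ≤ Real.sqrt (1-u) := by
    have : Real.exp (-(2*u)) = (Real.exp (-u))^2 := by
      rw [sq, ← Real.exp_add]; ring_nf
    calc Real.exp (-u) = Real.sqrt (Real.exp (-(2*u))) := by
          rw [this, Real.sqrt_sq (Real.exp_nonneg _)]
      _ ≤ Real.sqrt (1-u) := Real.sqrt_le_sqrt key
  calc (Real.sqrt (1-u))⁻¹ ≤ (Real.exp (-u))⁻¹ :=
        inv_anti₀ (Real.exp_pos _) hsq
    _ = Real.exp u := by rw [← Real.exp_neg, neg_neg]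

lemma aux_mgf_prod {Ω : Type*} [MeasureSpace Ω] [IsProbabilityMeasure (ℙ : Measure Ω)]
    {X Y : Ω → ℝ} (hmX : Measurable X) (hmY : Measurable Y)
    (hind : IndepFun X Y ℙ) (hdX : Measure.map X ℙ = gaussianReal 0 1)
    (hdY : Measure.map Y ℙ = gaussianReal 0 1) {l : ℝ} (hl : |l| ≤ 1/2) :
    Integrable (fun ω => Real.exp (l * (X ω * Y ω))) ℙ ∧
      ∫ ω, Real.exp (l * (X ω * Y ω)) ∂ℙ ≤ Real.exp (l^2) := by
  have hl2 : l^2 ≤ 1/4 := by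
    rw [← sq_abs]; nlinarith [abs_nonneg l]
  have ha : l^2/2 < 1/2 := by linarith
  set γ : Measure ℝ := gaussianReal 0 1 with hγ
  have hmap : Measure.map (fun ω => (X ω, Y ω)) ℙ = γ.prod γ := by
    have h := (indepFun_iff_map_prod_eq_prod_map_map hmX.aemeasurable hmY.aemeasurable).mp hind
    rw [hdX, hdY] at h
    exact h
  set g : ℝ × ℝ → ℝ := fun p => Real.exp (l * (p.1 * p.2)) with hg
  have hgm : Measurable g := by
    apply Real.measurable_exp.comp
    exact (measurable_const.mul (measurable_fst.mul measurable_snd))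
  have hsec : ∀ x : ℝ, (fun y => g (x, y)) = fun y => Real.exp ((l*x)*y) := by
    intro x; funext y; simp only [hg]; ring_nf
  have hsecint : ∀ x : ℝ, ∫ y, g (x, y) ∂γ = Real.exp ((l^2/2) * x^2) := by
    intro x
    rw [hsec x, aux_integral_exp_mul (l*x)]
    congr 1; ring
  have hint : Integrable g (γ.prod γ) := by
    refine (integrable_prod_iff hgm.aestronglyMeasurable).mpr ⟨?_, ?_⟩
    · exact Filter.Eventually.of_forall fun x => by
        rw [hsec x]; exact aux_integrable_exp_mul (l*x)
    · have : (fun x => ∫ y, ‖g (x, y)‖ ∂γ) = fun x => Real.exp ((l^2/2) * x^2) := by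
        funext x
        rw [← hsecint x]
        congr 1
        funext y
        simp only [Real.norm_eq_abs, hg, Real.abs_exp]
      rw [this]
      exact aux_integrable_exp_sq ha
  have hpair : AEMeasurable (fun ω => (X ω, Y ω)) ℙ := (hmX.prodMk hmY).aemeasurable
  constructor
  · have := (integrable_map_measure hgm.aestronglyMeasurable hpair).mp (hmap ▸ hint)
    exact this
  · have heq : ∫ ω, Real.exp (l * (X ω * Y ω)) ∂ℙ = ∫ p, g p ∂(γ.prod γ) := by
      rw [← hmap, integral_map hpair (hmap ▸ hgm.aestronglyMeasurable)]
    rw [heq, integral_prod g hint]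
    simp_rw [hsecint]
    rw [aux_integral_exp_sq ha]
    have : 1 - 2*(l^2/2) = 1 - l^2 := by ring
    rw [this]
    exact aux_inv_sqrt_le (sq_nonneg l) hl2

lemma aux_pair_indep {Ω : Type*} [MeasureSpace Ω]
    {X Y : ℕ → Ω → ℝ} (hmX : ∀ i, Measurable (X i)) (hmY : ∀ i, Measurable (Y i))
    (hindep : iIndepFun (Sum.elim X Y) ℙ) :
    iIndepFun (fun i ω => (X i ω, Y i ω)) ℙ := by
  classical
  have hW : ∀ i, Measurable (fun ω => (X i ω, Y i ω)) := fun i => (hmX i).prodMk (hmY i)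
  rw [iIndepFun_iff_iIndep]
  set piSys : ℕ → Set (Set Ω) := fun i =>
    {s | ∃ A B : Set ℝ, MeasurableSet A ∧ MeasurableSet B ∧ s = X i ⁻¹' A ∩ Y i ⁻¹' B} with hpiSys
  refine iIndepSets.iIndep (fun i => (hW i).comap_le) piSys ?_ ?_ ?_
  · -- pi systems
    rintro i _ ⟨A1, B1, hA1, hB1, rfl⟩ _ ⟨A2, B2, hA2, hB2, rfl⟩ _
    exact ⟨A1 ∩ A2, B1 ∩ B2, hA1.inter hA2, hB1.inter hB2, by
      ext ω; simp only [Set.mem_inter_iff, Set.mem_preimage, Set.mem_inter_iff]; tauto⟩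
  · -- generate
    intro i
    rw [← generateFrom_prod, MeasurableSpace.comap_generateFrom]
    congr 1
    ext s
    constructor
    · rintro ⟨_, ⟨A, hA, B, hB, rfl⟩, rfl⟩
      exact ⟨A, B, hA, hB, (Set.mk_preimage_prod _ _).symm⟩
    · rintro ⟨A, B, hA, hB, rfl⟩
      exact ⟨A ×ˢ B, ⟨A, hA, B, hB, rfl⟩, Set.mk_preimage_prod _ _⟩
  · -- independence of the pi systems
    rw [iIndepSets_iff]
    intro S f' hf'
    choose A B hA hB heq using hf'
    set sets : ℕ ⊕ ℕ → Set ℝ := Sum.elim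
      (fun i => if h : i ∈ S then A i h else Set.univ)
      (fun i => if h : i ∈ S then B i h else Set.univ) with hsets
    have hmeas : ∀ j, j ∈ S.disjSum S → MeasurableSet (sets j) := by
      rintro (i | i) hj
      · rw [Finset.inl_mem_disjSum] at hj
        simpa [hsets, hj] using hA i hj
      · rw [Finset.inr_mem_disjSum] at hj
        simpa [hsets, hj] using hB i hj
    have key := hindep.measure_inter_preimage_eq_mul (S.disjSum S) hmeas
    have hset : (⋂ j ∈ S.disjSum S, Sum.elim X Y j ⁻¹' sets j) = ⋂ i ∈ S, f' i := by
      ext ω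
      simp only [Set.mem_iInter]
      constructor
      · intro h i hi
        have h1 := h (Sum.inl i) (Finset.inl_mem_disjSum.mpr hi)
        have h2 := h (Sum.inr i) (Finset.inr_mem_disjSum.mpr hi)
        simp only [hsets, Sum.elim_inl, Sum.elim_inr, dif_pos hi, Set.mem_preimage] at h1 h2
        rw [heq i hi]
        exact ⟨h1, h2⟩
      · rintro h (i | i) hj
        · rw [Finset.inl_mem_disjSum] at hj
          have := h i hj
          rw [heq i hj] at this
          simpa [hsets, hj] using this.1
        · rw [Finset.inr_mem_disjSum] at hj
          have := h i hj
          rw [heq i hj] at this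
          simpa [hsets, hj] using this.2
    have hprod : ∏ j ∈ S.disjSum S, ℙ (Sum.elim X Y j ⁻¹' sets j) = ∏ i ∈ S, ℙ (f' i) := by
      rw [Finset.prod_disjSum, ← Finset.prod_mul_distrib]
      refine Finset.prod_congr rfl fun i hi => ?_
      have hind_i : IndepFun (X i) (Y i) ℙ :=
        hindep.indepFun (show (Sum.inl i : ℕ ⊕ ℕ) ≠ Sum.inr i by simp)
      have hmi := hind_i.meas_inter (s := X i ⁻¹' A i hi) (t := Y i ⁻¹' B i hi)
        ⟨A i hi, hA i hi, rfl⟩ ⟨B i hi, hB i hi, rfl⟩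
      simp only [hsets, Sum.elim_inl, Sum.elim_inr, dif_pos hi]
      rw [← hmi, heq i hi]
    rw [hset, hprod] at key
    exact key

lemma aux_real' (K : ℝ) (hK1 : 1 ≤ K) (hKint : K < 64/25 → K = 1 ∨ K = 2)
    {δ : ℝ} (hδ0 : 0 < δ) (hδ1 : δ ≤ 1/2) :
    ∃ l : ℝ, 0 ≤ l ∧ l ≤ 1/2 ∧
      Real.exp (-l * (5 * Real.sqrt K * Real.log (K/δ)) + K * l^2) ≤ δ / K^2 := by
  have hK0 : (0:ℝ) < K := by linarith
  set lk : ℝ := Real.log K with hlkdef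
  set M : ℝ := -Real.log δ with hMdef
  set L : ℝ := Real.log (K/δ) with hLdef
  have hLeq : L = lk + M := by
    rw [hLdef, Real.log_div (by positivity) (ne_of_gt hδ0)]; ring
  have hlk0 : 0 ≤ lk := Real.log_nonneg hK1
  have h069 : (0.69:ℝ) < Real.log 2 := by
    have := Real.log_two_gt_d9; linarith
  have hM : Real.log 2 ≤ M := by
    have h1 : Real.log δ ≤ Real.log (1/2) := Real.log_le_log hδ0 hδ1
    rw [one_div, Real.log_inv] at h1
    linarith [h1]
  have hM069 : (0.69:ℝ) ≤ M := by linarith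
  have hL069 : (0.69:ℝ) ≤ L := by rw [hLeq]; linarith
  have hL0 : 0 ≤ L := by linarith
  have hsqK0 : 0 ≤ Real.sqrt K := Real.sqrt_nonneg K
  have hsqK1 : 1 ≤ Real.sqrt K := by
    rw [show (1:ℝ) = Real.sqrt 1 from (Real.sqrt_one).symm]
    exact Real.sqrt_le_sqrt hK1
  have hsq : (Real.sqrt K)^2 = K := Real.sq_sqrt (le_of_lt hK0)
  set t : ℝ := 5 * Real.sqrt K * L with htdef
  have ht0 : 0 ≤ t := by positivity
  have hlogtarget : Real.log (δ / K^2) = -M - 2*lk := by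
    rw [Real.log_div (ne_of_gt hδ0) (by positivity), Real.log_pow]
    push_cast
    ring
  have hfinish : ∀ l : ℝ, -l * t + K * l^2 ≤ -M - 2*lk →
      Real.exp (-l * t + K * l^2) ≤ δ / K^2 := by
    intro l hle
    have hpos : (0:ℝ) < δ / K^2 := by positivity
    calc Real.exp (-l * t + K * l^2) ≤ Real.exp (Real.log (δ / K^2)) := by
          rw [hlogtarget]; exact Real.exp_le_exp.mpr hle
      _ = δ / K^2 := Real.exp_log hpos
  rcases le_or_gt t K with hcase | hcase
  · -- l = t/(2K)
    refine ⟨t/(2*K), by positivity, ?_, ?_⟩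
    · rw [div_le_iff₀ (by linarith)]; linarith
    · apply hfinish
      have hE : -(t/(2*K)) * t + K * (t/(2*K))^2 = -(t^2) / (4*K) := by
        field_simp; ring
      have ht2 : t^2 = 25 * K * L^2 := by
        rw [htdef, mul_pow, mul_pow, hsq]; ring
      rw [hE, ht2]
      have hquot : -(25 * K * L^2) / (4*K) = -(25 * L^2 / 4) := by
        field_simp
      rw [hquot]
      nlinarith [mul_nonneg hL0 (show (0:ℝ) ≤ 25*L - 16 by linarith)]
  · -- l = 1/2
    refine ⟨1/2, by norm_num, le_refl _, ?_⟩
    apply hfinish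
    have h1 : -(1/2:ℝ) * t + K * (1/2)^2 ≤ -t/4 := by nlinarith
    have h2 : M + 2*lk ≤ t/4 := by
      rw [htdef, hLeq]
      rcases le_or_gt (8/5 : ℝ) (Real.sqrt K) with hbig | hsmall
      · nlinarith [mul_nonneg (show (0:ℝ) ≤ lk + M by linarith)
          (show (0:ℝ) ≤ 5*Real.sqrt K - 8 by linarith)]
      · have hKlt : K < 64/25 := by nlinarith
        rcases hKint hKlt with hKe | hKe
        · have hlk : lk = 0 := by rw [hlkdef, hKe, Real.log_one]
          have hs1 : Real.sqrt K = 1 := by rw [hKe, Real.sqrt_one]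
          rw [hlk, hs1]
          nlinarith
        · have hlk2 : lk = Real.log 2 := by rw [hlkdef, hKe]
          have h196 : (1.4:ℝ) = Real.sqrt 1.96 := by
            rw [show (1.96:ℝ) = 1.4^2 by norm_num, Real.sqrt_sq (by norm_num)]
          have hs2 : (1.4:ℝ) ≤ Real.sqrt K := by
            rw [hKe, h196]; exact Real.sqrt_le_sqrt (by norm_num)
          rw [hlk2]
          have hmul : 1.4*(Real.log 2 + M) ≤ Real.sqrt K * (Real.log 2 + M) :=
            mul_le_mul_of_nonneg_right hs2 (by linarith)
          linarith
    linarith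

lemma aux_real (k : ℕ) (hk : 1 ≤ k) {δ : ℝ} (hδ0 : 0 < δ) (hδ1 : δ ≤ 1/2) :
    ∃ l : ℝ, 0 ≤ l ∧ l ≤ 1/2 ∧
      Real.exp (-l * (5 * Real.sqrt k * Real.log (k/δ)) + k * l^2) ≤ δ / (k:ℝ)^2 := by
  refine aux_real' (k:ℝ) (by exact_mod_cast hk) (fun hlt => ?_) hδ0 hδ1
  have hk2 : k ≤ 2 := by
    by_contra hcon
    push_neg at hcon
    have : (3:ℝ) ≤ (k:ℝ) := by exact_mod_cast hcon
    linarith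
  interval_cases k
  · left; norm_num
  · right; norm_num

lemma aux_tail {Ω : Type*} [MeasureSpace Ω] [IsProbabilityMeasure (ℙ : Measure Ω)]
    (X Y : ℕ → Ω → ℝ) (hmX : ∀ i, Measurable (X i)) (hmY : ∀ i, Measurable (Y i))
    (hindep : iIndepFun (Sum.elim X Y) ℙ)
    (hdX : ∀ i, Measure.map (X i) ℙ = gaussianReal 0 1)
    (hdY : ∀ i, Measure.map (Y i) ℙ = gaussianReal 0 1)
    {δ : ℝ} (hδ0 : 0 < δ) (hδ1 : δ ≤ 1 / 2) (k : ℕ) (hk : 1 ≤ k) :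
    ℙ {ω | ¬ |∑ i ∈ Finset.Icc 1 k, X i ω * Y i ω| ≤
        5 * Real.sqrt k * Real.log (k / δ)} ≤ ENNReal.ofReal (2 * (δ / (k:ℝ)^2)) := by
  obtain ⟨l, hl0, hl12, hlbound⟩ := aux_real k hk hδ0 hδ1
  set Z : ℕ → Ω → ℝ := fun i ω => X i ω * Y i ω with hZ
  have hmZ : ∀ i, Measurable (Z i) := fun i => (hmX i).mul (hmY i)
  have hZindep : iIndepFun Z ℙ := by
    have h := (aux_pair_indep hmX hmY hindep).comp
      (fun _ (p : ℝ × ℝ) => p.1 * p.2) (fun _ => measurable_fst.mul measurable_snd)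
    exact h
  have hXYind : ∀ i, IndepFun (X i) (Y i) ℙ := fun i =>
    hindep.indepFun (show (Sum.inl i : ℕ ⊕ ℕ) ≠ Sum.inr i by simp)
  have habs : |l| ≤ 1/2 := abs_le.mpr ⟨by linarith, hl12⟩
  have habs' : |(-l)| ≤ 1/2 := by rwa [abs_neg]
  have hint : ∀ (c : ℝ), |c| ≤ 1/2 → ∀ i, Integrable (fun ω => Real.exp (c * Z i ω)) ℙ :=
    fun c hc i => (aux_mgf_prod (hmX i) (hmY i) (hXYind i) (hdX i) (hdY i) hc).1
  have hmgfb : ∀ (c : ℝ), |c| ≤ 1/2 → ∀ i, mgf (Z i) ℙ c ≤ Real.exp (c^2) :=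
    fun c hc i => (aux_mgf_prod (hmX i) (hmY i) (hXYind i) (hdX i) (hdY i) hc).2
  set S : Ω → ℝ := ∑ i ∈ Finset.Icc 1 k, Z i with hSdef
  have hSω : ∀ ω, S ω = ∑ i ∈ Finset.Icc 1 k, X i ω * Y i ω := by
    intro ω; rw [hSdef, Finset.sum_apply]
  have hintS : ∀ (c : ℝ), |c| ≤ 1/2 → Integrable (fun ω => Real.exp (c * S ω)) ℙ :=
    fun c hc => hZindep.integrable_exp_mul_sum hmZ (fun i _ => hint c hc i)
  have hcard : (Finset.Icc 1 k).card = k := by rw [Nat.card_Icc]; omega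
  have hmgfS : ∀ (c : ℝ), |c| ≤ 1/2 → mgf S ℙ c ≤ Real.exp (k * c^2) := by
    intro c hc
    rw [hSdef, hZindep.mgf_sum hmZ]
    calc ∏ i ∈ Finset.Icc 1 k, mgf (Z i) ℙ c
        ≤ ∏ i ∈ Finset.Icc 1 k, Real.exp (c^2) :=
          Finset.prod_le_prod (fun i _ => mgf_nonneg) (fun i _ => hmgfb c hc i)
      _ = Real.exp (c^2) ^ k := by rw [Finset.prod_const, hcard]
      _ = Real.exp (k * c^2) := by rw [← Real.exp_nat_mul]
  set tv : ℝ := 5 * Real.sqrt k * Real.log (k / δ) with htv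
  have hup : (ℙ {ω | tv ≤ S ω}).toReal ≤ δ / (k:ℝ)^2 := by
    calc (ℙ {ω | tv ≤ S ω}).toReal
        ≤ Real.exp (-l * tv) * mgf S ℙ l := measure_ge_le_exp_mul_mgf tv hl0 (hintS l habs)
      _ ≤ Real.exp (-l * tv) * Real.exp (k * l^2) := by
          exact mul_le_mul_of_nonneg_left (hmgfS l habs) (Real.exp_nonneg _)
      _ = Real.exp (-l * tv + k * l^2) := (Real.exp_add _ _).symm
      _ ≤ δ / (k:ℝ)^2 := hlbound
  have hlow : (ℙ {ω | S ω ≤ -tv}).toReal ≤ δ / (k:ℝ)^2 := by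
    calc (ℙ {ω | S ω ≤ -tv}).toReal
        ≤ Real.exp (-(-l) * (-tv)) * mgf S ℙ (-l) :=
          measure_le_le_exp_mul_mgf (-tv) (neg_nonpos.mpr hl0) (hintS (-l) habs')
      _ ≤ Real.exp (-(-l) * (-tv)) * Real.exp (k * (-l)^2) := by
          exact mul_le_mul_of_nonneg_left (hmgfS (-l) habs') (Real.exp_nonneg _)
      _ = Real.exp (-l * tv + k * l^2) := by rw [← Real.exp_add]; ring_nf
      _ ≤ δ / (k:ℝ)^2 := hlbound
  have hsub : {ω | ¬ |∑ i ∈ Finset.Icc 1 k, X i ω * Y i ω| ≤ tv}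
      ⊆ {ω | tv ≤ S ω} ∪ {ω | S ω ≤ -tv} := by
    intro ω hω
    simp only [Set.mem_setOf_eq, not_le] at hω
    rw [← hSω ω] at hω
    rcases lt_abs.mp hω with h | h
    · left; simp only [Set.mem_setOf_eq]; linarith
    · right; simp only [Set.mem_setOf_eq]; linarith
  have hb1 : ℙ {ω | tv ≤ S ω} ≤ ENNReal.ofReal (δ / (k:ℝ)^2) := by
    rw [← ENNReal.ofReal_toReal (measure_ne_top ℙ _)]
    exact ENNReal.ofReal_le_ofReal hup
  have hb2 : ℙ {ω | S ω ≤ -tv} ≤ ENNReal.ofReal (δ / (k:ℝ)^2) := by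
    rw [← ENNReal.ofReal_toReal (measure_ne_top ℙ _)]
    exact ENNReal.ofReal_le_ofReal hlow
  calc ℙ {ω | ¬ |∑ i ∈ Finset.Icc 1 k, X i ω * Y i ω| ≤ tv}
      ≤ ℙ ({ω | tv ≤ S ω} ∪ {ω | S ω ≤ -tv}) := measure_mono hsub
    _ ≤ ℙ {ω | tv ≤ S ω} + ℙ {ω | S ω ≤ -tv} := measure_union_le _ _
    _ ≤ ENNReal.ofReal (δ / (k:ℝ)^2) + ENNReal.ofReal (δ / (k:ℝ)^2) := add_le_add hb1 hb2
    _ = ENNReal.ofReal (2 * (δ / (k:ℝ)^2)) := by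
        rw [← ENNReal.ofReal_add (by positivity) (by positivity)]
        congr 1; ring

theorem stmt_1 {Ω : Type*} [MeasureSpace Ω] [IsProbabilityMeasure (ℙ : Measure Ω)]
    (X Y : ℕ → Ω → ℝ) (hmX : ∀ i, Measurable (X i)) (hmY : ∀ i, Measurable (Y i))
    (hindep : iIndepFun (Sum.elim X Y) ℙ)
    (hdX : ∀ i, Measure.map (X i) ℙ = gaussianReal 0 1)
    (hdY : ∀ i, Measure.map (Y i) ℙ = gaussianReal 0 1)
    (δ : ℝ) (hδ0 : 0 < δ) (hδ1 : δ ≤ 1 / 2) :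
    1 - 8 * δ ≤ (ℙ {ω | ∀ k : ℕ, 1 ≤ k →
        |∑ i ∈ Finset.Icc 1 k, X i ω * Y i ω| ≤
          5 * Real.sqrt k * Real.log (k / δ)}).toReal := by
  set E := {ω | ∀ k : ℕ, 1 ≤ k →
      |∑ i ∈ Finset.Icc 1 k, X i ω * Y i ω| ≤ 5 * Real.sqrt k * Real.log (k / δ)} with hEdef
  have hmS : ∀ k : ℕ, Measurable (fun ω => ∑ i ∈ Finset.Icc 1 k, X i ω * Y i ω) := by
    intro k
    exact Finset.measurable_sum _ (fun i _ => (hmX i).mul (hmY i))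
  have hE : MeasurableSet E := by
    have hEeq : E = ⋂ k : ℕ, {ω | 1 ≤ k →
        |∑ i ∈ Finset.Icc 1 k, X i ω * Y i ω| ≤ 5 * Real.sqrt k * Real.log (k / δ)} := by
      ext ω; simp [hEdef, Set.mem_iInter]
    rw [hEeq]
    refine MeasurableSet.iInter fun k => ?_
    by_cases hk : 1 ≤ k
    · simp only [hk, forall_true_left]
      exact measurableSet_le ((hmS k).abs) measurable_const
    · simp only [hk, false_implies]
      exact MeasurableSet.univ
  set B : ℕ → Set Ω := fun n => {ω | ¬ |∑ i ∈ Finset.Icc 1 (n+1), X i ω * Y i ω| ≤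
      5 * Real.sqrt (n+1 : ℕ) * Real.log ((n+1 : ℕ) / δ)} with hBdef
  have hEc : Eᶜ ⊆ ⋃ n : ℕ, B n := by
    intro ω hω
    simp only [hEdef, Set.mem_compl_iff, Set.mem_setOf_eq, not_forall] at hω
    obtain ⟨k, hk, hbad⟩ := hω
    refine Set.mem_iUnion.mpr ⟨k - 1, ?_⟩
    have hk1 : k - 1 + 1 = k := by omega
    simp only [hBdef, Set.mem_setOf_eq, hk1]
    exact hbad
  have htail : ∀ n : ℕ, ℙ (B n) ≤ ENNReal.ofReal ((2*δ) * (1/((n:ℝ)+1)^2)) := by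
    intro n
    have h := aux_tail X Y hmX hmY hindep hdX hdY hδ0 hδ1 (n+1) (by omega)
    refine le_trans h (le_of_eq ?_)
    congr 1
    push_cast
    ring
  have hshift : HasSum (fun n : ℕ => (1:ℝ)/((n:ℝ)+1)^2) (π^2/6) := by
    have h0 : HasSum (fun n : ℕ => (1:ℝ) / (n:ℝ)^2) (π^2/6) := hasSum_zeta_two
    have h1 : HasSum (fun n : ℕ => (1:ℝ)/((n+1 : ℕ):ℝ)^2) (π^2/6) := by
      rw [hasSum_nat_add_iff (f := fun n : ℕ => (1:ℝ)/(n:ℝ)^2) 1]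
      simpa using h0
    refine h1.congr_fun fun n => ?_
    push_cast
    ring_nf
  have hs2 : HasSum (fun n : ℕ => (2*δ) * ((1:ℝ)/((n:ℝ)+1)^2)) ((2*δ) * (π^2/6)) :=
    hshift.mul_left _
  have hsumEc : ℙ Eᶜ ≤ ENNReal.ofReal (8*δ) := by
    calc ℙ Eᶜ ≤ ℙ (⋃ n, B n) := measure_mono hEc
      _ ≤ ∑' n, ℙ (B n) := measure_iUnion_le _
      _ ≤ ∑' (n : ℕ), ENNReal.ofReal ((2*δ) * (1/((n:ℝ)+1)^2)) := ENNReal.tsum_le_tsum htail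
      _ = ENNReal.ofReal (∑' (n : ℕ), (2*δ) * (1/((n:ℝ)+1)^2)) :=
          (ENNReal.ofReal_tsum_of_nonneg (fun n => by positivity) hs2.summable).symm
      _ ≤ ENNReal.ofReal (8*δ) := by
          refine ENNReal.ofReal_le_ofReal ?_
          rw [hs2.tsum_eq]
          have hpi2 : π^2 ≤ 16 := by nlinarith [Real.pi_le_four, Real.pi_pos]
          nlinarith [mul_le_mul_of_nonneg_left hpi2 hδ0.le]
  have h8 : (ℙ Eᶜ).toReal ≤ 8*δ := by
    calc (ℙ Eᶜ).toReal ≤ (ENNReal.ofReal (8*δ)).toReal :=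
          ENNReal.toReal_mono ENNReal.ofReal_ne_top hsumEc
      _ = 8*δ := ENNReal.toReal_ofReal (by positivity)
  have hsplit : (ℙ E).toReal + (ℙ Eᶜ).toReal = 1 := by
    rw [← ENNReal.toReal_add (measure_ne_top _ _) (measure_ne_top _ _),
      measure_add_measure_compl hE]
    simp
  linarith
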